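/- arXiv:1207.0979 — 3 statements merged into one kernel-verified Lean document; each statement's English description precedes it below -/
import Mathlib

section
/- Let P be a convex quadrilateral in ℝ² with vertices (ℓ₁, y₁), (r₁, y₁), (ℓ₂, y₂), (r₂, y₂) where y₁, y₂ ∈ ℤ, y₂ - y₁ = k ≥ 1, ℓ₁ < r₁, ℓ₂ < r₂. Assume the arithmetic progression data a, d, ε satisfies 0 < ε ≤ d/2, a - ε > 0, a + kd + ε < 1, and: {ℓ₁} = a + ε, {ℓ₂} = a + kd + ε, {r₁} = a - ε, {r₂} = a + kd - ε, and k divides both ⌊ℓ₂⌋ - ⌊ℓ₁⌋ and ⌊r₂⌋ - ⌊r₁⌋. Then there exists M ∈ ℕ such that for all t ∈ [0,1], the number of integer points in P + (-t, 0) equals M + p(t), where p(t) = 0 if |t - (a + id)| < ε for some i ∈ {0,...,k} and p(t) = 1 otherwise. -/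
set_option maxHeartbeats 1000000


lemma hull_char (ℓ₁ r₁ ℓ₂ r₂ y₁ y₂ : ℝ) (hl1 : ℓ₁ < r₁) (hl2 : ℓ₂ < r₂)
    (hy : y₁ < y₂) (x y : ℝ) :
    (x, y) ∈ convexHull ℝ {(ℓ₁, y₁), (r₁, y₁), (ℓ₂, y₂), (r₂, y₂)} ↔
      y₁ ≤ y ∧ y ≤ y₂ ∧ ℓ₁ * (y₂ - y) + ℓ₂ * (y - y₁) ≤ x * (y₂ - y₁) ∧
        x * (y₂ - y₁) ≤ r₁ * (y₂ - y) + r₂ * (y - y₁) := by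
  constructor
  · intro h
    set Q : Set (ℝ × ℝ) := {p : ℝ × ℝ | y₁ ≤ p.2 ∧ p.2 ≤ y₂ ∧
      ℓ₁ * (y₂ - p.2) + ℓ₂ * (p.2 - y₁) ≤ p.1 * (y₂ - y₁) ∧
      p.1 * (y₂ - y₁) ≤ r₁ * (y₂ - p.2) + r₂ * (p.2 - y₁)} with hQdef
    have hconv : Convex ℝ Q := by
      intro p hp q hq α β hα hβ hab
      obtain ⟨p1, p2, p3, p4⟩ := hp
      obtain ⟨q1, q2, q3, q4⟩ := hq
      have hβ' : β = 1 - α := by linarith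
      subst hβ'
      refine ⟨?_, ?_, ?_, ?_⟩ <;>
        simp only [Prod.fst_add, Prod.snd_add, Prod.smul_fst, Prod.smul_snd, smul_eq_mul]
      · nlinarith [mul_le_mul_of_nonneg_left p1 hα, mul_le_mul_of_nonneg_left q1 hβ]
      · nlinarith [mul_le_mul_of_nonneg_left p2 hα, mul_le_mul_of_nonneg_left q2 hβ]
      · nlinarith [mul_le_mul_of_nonneg_left p3 hα, mul_le_mul_of_nonneg_left q3 hβ]
      · nlinarith [mul_le_mul_of_nonneg_left p4 hα, mul_le_mul_of_nonneg_left q4 hβ]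
    have hsub : convexHull ℝ {(ℓ₁, y₁), (r₁, y₁), (ℓ₂, y₂), (r₂, y₂)} ⊆ Q := by
      apply convexHull_min _ hconv
      intro v hv
      simp only [Set.mem_insert_iff, Set.mem_singleton_iff] at hv
      rcases hv with rfl | rfl | rfl | rfl <;>
        exact ⟨by simp [le_of_lt hy], by simp [le_of_lt hy], by nlinarith, by nlinarith⟩
    exact hsub h
  · rintro ⟨h1, h2, h3, h4⟩
    have hyk : 0 < y₂ - y₁ := by linarith
    set s : ℝ := (y - y₁) / (y₂ - y₁) with hs
    have hs0 : 0 ≤ s := div_nonneg (by linarith) (le_of_lt hyk)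
    have hs1 : s ≤ 1 := by rw [hs, div_le_one hyk]; linarith
    have hsy : s * (y₂ - y₁) = y - y₁ := div_mul_cancel₀ _ (ne_of_gt hyk)
    set Lx : ℝ := (1 - s) * ℓ₁ + s * ℓ₂ with hLx
    set Rx : ℝ := (1 - s) * r₁ + s * r₂ with hRx
    have hLxe : Lx * (y₂ - y₁) = ℓ₁ * (y₂ - y) + ℓ₂ * (y - y₁) := by
      rw [hLx]; linear_combination (ℓ₂ - ℓ₁) * hsy
    have hRxe : Rx * (y₂ - y₁) = r₁ * (y₂ - y) + r₂ * (y - y₁) := by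
      rw [hRx]; linear_combination (r₂ - r₁) * hsy
    have hxL : Lx ≤ x := by
      rw [← mul_le_mul_iff_left₀ hyk, hLxe]; exact h3
    have hxR : x ≤ Rx := by
      rw [← mul_le_mul_iff_left₀ hyk, hRxe]; exact h4
    have hRL : 0 < Rx - Lx := by
      have he : Rx - Lx = (1 - s) * (r₁ - ℓ₁) + s * (r₂ - ℓ₂) := by rw [hRx, hLx]; ring
      rcases eq_or_lt_of_le hs1 with h | h
      · rw [he, h]; norm_num; linarith
      · rw [he]
        nlinarith [mul_nonneg hs0 (le_of_lt (sub_pos.mpr hl2)),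
          mul_pos (sub_pos.mpr h) (sub_pos.mpr hl1)]
    set τ : ℝ := (x - Lx) / (Rx - Lx) with hτ
    have hτ0 : 0 ≤ τ := div_nonneg (by linarith) (le_of_lt hRL)
    have hτ1 : τ ≤ 1 := by rw [hτ, div_le_one hRL]; linarith
    have hτx : τ * (Rx - Lx) = x - Lx := div_mul_cancel₀ _ (ne_of_gt hRL)
    set L : ℝ × ℝ := (1 - s) • ((ℓ₁, y₁) : ℝ × ℝ) + s • ((ℓ₂, y₂) : ℝ × ℝ) with hL
    set R : ℝ × ℝ := (1 - s) • ((r₁, y₁) : ℝ × ℝ) + s • ((r₂, y₂) : ℝ × ℝ) with hR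
    have hLmem : L ∈ convexHull ℝ {(ℓ₁, y₁), (r₁, y₁), (ℓ₂, y₂), (r₂, y₂)} :=
      segment_subset_convexHull (x := ((ℓ₁, y₁) : ℝ × ℝ)) (y := ((ℓ₂, y₂) : ℝ × ℝ))
        (by simp) (by simp) ⟨1 - s, s, by linarith, hs0, by ring, rfl⟩
    have hRmem : R ∈ convexHull ℝ {(ℓ₁, y₁), (r₁, y₁), (ℓ₂, y₂), (r₂, y₂)} :=
      segment_subset_convexHull (x := ((r₁, y₁) : ℝ × ℝ)) (y := ((r₂, y₂) : ℝ × ℝ))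
        (by simp) (by simp) ⟨1 - s, s, by linarith, hs0, by ring, rfl⟩
    have hmem : (x, y) ∈ segment ℝ L R := by
      refine ⟨1 - τ, τ, by linarith, hτ0, by ring, ?_⟩
      have hLfst : L.1 = Lx := by rw [hL, hLx]; simp
      have hRfst : R.1 = Rx := by rw [hR, hRx]; simp
      have hLsnd : L.2 = y := by
        rw [hL]; simp only [Prod.snd_add, Prod.smul_snd, smul_eq_mul]
        linear_combination hsy
      have hRsnd : R.2 = y := by
        rw [hR]; simp only [Prod.snd_add, Prod.smul_snd, smul_eq_mul]
        linear_combination hsy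
      have e1 : ((1 - τ) • L + τ • R).1 = x := by
        simp only [Prod.fst_add, Prod.smul_fst, smul_eq_mul, hLfst, hRfst]
        linear_combination hτx
      have e2 : ((1 - τ) • L + τ • R).2 = y := by
        simp only [Prod.snd_add, Prod.smul_snd, smul_eq_mul, hLsnd, hRsnd]
        ring
      exact Prod.ext e1 e2
    exact (convex_convexHull ℝ _).segment_subset hLmem hRmem hmem

theorem stmt2 (a d ε ℓ₁ r₁ ℓ₂ r₂ : ℝ) (y₁ y₂ : ℤ) (k : ℕ)
    (hk : 1 ≤ k) (hy : y₂ - y₁ = (k : ℤ))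
    (hε : 0 < ε) (hεd : ε ≤ d / 2)
    (h1 : 0 < a - ε) (h2 : a + k * d + ε < 1)
    (hl1 : ℓ₁ < r₁) (hl2 : ℓ₂ < r₂)
    (hf1 : Int.fract ℓ₁ = a + ε) (hf2 : Int.fract ℓ₂ = a + k * d + ε)
    (hf3 : Int.fract r₁ = a - ε) (hf4 : Int.fract r₂ = a + k * d - ε)
    (hdiv1 : (k : ℤ) ∣ ⌊ℓ₂⌋ - ⌊ℓ₁⌋) (hdiv2 : (k : ℤ) ∣ ⌊r₂⌋ - ⌊r₁⌋) :
    ∃ M : ℕ, ∀ t ∈ Set.Icc (0:ℝ) 1,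
      {p : ℤ × ℤ | ((p.1 : ℝ) + t, (p.2 : ℝ)) ∈
          convexHull ℝ {(ℓ₁, (y₁ : ℝ)), (r₁, (y₁ : ℝ)), (ℓ₂, (y₂ : ℝ)), (r₂, (y₂ : ℝ))}}.ncard
        = M + (if ∃ i ≤ k, |t - (a + i * d)| < ε then 0 else 1) := by
  obtain ⟨mℓ, hmℓ⟩ := hdiv1
  obtain ⟨mr, hmr⟩ := hdiv2
  have hd : 0 < d := by linarith
  have hkR : (1:ℝ) ≤ (k:ℝ) := by exact_mod_cast hk
  have hk0 : (0:ℝ) < (k:ℝ) := by linarith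
  have hyR : ((y₂:ℝ) - (y₁:ℝ)) = (k:ℝ) := by exact_mod_cast congrArg (Int.cast : ℤ → ℝ) hy
  have hy12 : (y₁:ℝ) < (y₂:ℝ) := by linarith
  have e1 : ℓ₁ = (⌊ℓ₁⌋ : ℝ) + (a + ε) := by
    rw [← hf1]; exact (Int.floor_add_fract ℓ₁).symm
  have e2 : r₁ = (⌊r₁⌋ : ℝ) + (a - ε) := by
    rw [← hf3]; exact (Int.floor_add_fract r₁).symm
  have e3 : ℓ₂ = (⌊ℓ₂⌋ : ℝ) + (a + k * d + ε) := by
    rw [← hf2]; exact (Int.floor_add_fract ℓ₂).symm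
  have e4 : r₂ = (⌊r₂⌋ : ℝ) + (a + k * d - ε) := by
    rw [← hf4]; exact (Int.floor_add_fract r₂).symm
  have hml : ((⌊ℓ₂⌋:ℝ) - (⌊ℓ₁⌋:ℝ)) = (k:ℝ) * (mℓ:ℝ) := by exact_mod_cast congrArg (Int.cast : ℤ → ℝ) hmℓ
  have hmr' : ((⌊r₂⌋:ℝ) - (⌊r₁⌋:ℝ)) = (k:ℝ) * (mr:ℝ) := by exact_mod_cast congrArg (Int.cast : ℤ → ℝ) hmr
  have hLdiff : ℓ₂ - ℓ₁ = (k:ℝ) * (mℓ:ℝ) + (k:ℝ) * d := by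
    rw [e1, e3]; linarith [hml]
  have hRdiff : r₂ - r₁ = (k:ℝ) * (mr:ℝ) + (k:ℝ) * d := by
    rw [e2, e4]; linarith [hmr']
  -- width bound
  have hW : ∀ j : ℤ, 0 ≤ j → j ≤ (k:ℤ) → (1:ℤ) ≤ (⌊r₁⌋ + j*mr) - (⌊ℓ₁⌋ + j*mℓ) := by
    intro j hj0 hjk
    have hc0 : (0:ℝ) ≤ (j:ℝ) := by exact_mod_cast hj0
    have hck : (j:ℝ) ≤ (k:ℝ) := by exact_mod_cast hjk
    have hsum : (k:ℝ) * ((r₁ - ℓ₁) + (j:ℝ)*((mr:ℝ) - (mℓ:ℝ)))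
        = ((k:ℝ) - j) * (r₁ - ℓ₁) + (j:ℝ) * (r₂ - ℓ₂) := by
      linear_combination (j:ℝ) * hLdiff - (j:ℝ) * hRdiff
    have hpos : (0:ℝ) < (r₁ - ℓ₁) + (j:ℝ)*((mr:ℝ) - (mℓ:ℝ)) := by
      rcases eq_or_lt_of_le hc0 with h | h
      · rw [← h]; simpa using sub_pos.mpr hl1
      · nlinarith [hsum, mul_nonneg (sub_nonneg.mpr hck) (le_of_lt (sub_pos.mpr hl1)),
          mul_pos h (sub_pos.mpr hl2), hk0]
    have hZ : (0:ℝ) < (((⌊r₁⌋ + j*mr) - (⌊ℓ₁⌋ + j*mℓ) : ℤ) : ℝ) := by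
      push_cast
      nlinarith [hpos, e1, e2]
    have : (0:ℤ) < (⌊r₁⌋ + j*mr) - (⌊ℓ₁⌋ + j*mℓ) := by exact_mod_cast hZ
    omega
  -- sum lower bound
  have hcardIcc : (Finset.Icc (0:ℤ) (k:ℤ)).card = k + 1 := by
    rw [Int.card_Icc]; omega
  have hsumW : (k:ℤ) + 1 ≤ ∑ j ∈ Finset.Icc (0:ℤ) (k:ℤ), ((⌊r₁⌋ + j*mr) - (⌊ℓ₁⌋ + j*mℓ)) := by
    have := Finset.card_nsmul_le_sum (Finset.Icc (0:ℤ) (k:ℤ))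
      (fun j => (⌊r₁⌋ + j*mr) - (⌊ℓ₁⌋ + j*mℓ)) 1
      (fun j hj => by
        rw [Finset.mem_Icc] at hj
        exact hW j hj.1 hj.2)
    rw [hcardIcc] at this
    simpa using this
  refine ⟨((∑ j ∈ Finset.Icc (0:ℤ) (k:ℤ), ((⌊r₁⌋ + j*mr) - (⌊ℓ₁⌋ + j*mℓ))) - 1).toNat, ?_⟩
  intro t ht
  obtain ⟨ht0, ht1⟩ := ht
  have hM : (((∑ j ∈ Finset.Icc (0:ℤ) (k:ℤ), ((⌊r₁⌋ + j*mr) - (⌊ℓ₁⌋ + j*mℓ))) - 1).toNat : ℤ)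
      = (∑ j ∈ Finset.Icc (0:ℤ) (k:ℤ), ((⌊r₁⌋ + j*mr) - (⌊ℓ₁⌋ + j*mℓ))) - 1 := by
    have hk1 : (1:ℤ) ≤ (k:ℤ) := by exact_mod_cast hk
    refine Int.toNat_of_nonneg ?_
    omega
  -- ceil/floor evaluations
  have hceil : ∀ j : ℤ, 0 ≤ j → j ≤ (k:ℤ) →
      ⌈ℓ₁ + (j:ℝ) * ((mℓ:ℝ) + d) - t⌉ = ⌊ℓ₁⌋ + j*mℓ + (if t < a + (j:ℝ)*d + ε then 1 else 0) := by
    intro j hj0 hjk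
    have hj0R : (0:ℝ) ≤ (j:ℝ) := by exact_mod_cast hj0
    have hjkR : (j:ℝ) ≤ (k:ℝ) := by exact_mod_cast hjk
    have hjd0 : 0 ≤ (j:ℝ)*d := mul_nonneg hj0R hd.le
    have hjdk : (j:ℝ)*d ≤ (k:ℝ)*d := mul_le_mul_of_nonneg_right hjkR hd.le
    have heq : ℓ₁ + (j:ℝ) * ((mℓ:ℝ) + d) - t
        = (a + (j:ℝ)*d + ε - t) + ((⌊ℓ₁⌋ + j*mℓ : ℤ):ℝ) := by
      push_cast; linear_combination e1
    rw [heq, Int.ceil_add_intCast]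
    split_ifs with h
    · rw [show (⌈a + (j:ℝ)*d + ε - t⌉ = 1) from Int.ceil_eq_iff.mpr
        ⟨by push_cast; linarith, by push_cast; linarith⟩]
      ring
    · push_neg at h
      rw [show (⌈a + (j:ℝ)*d + ε - t⌉ = 0) from Int.ceil_eq_iff.mpr
        ⟨by push_cast; linarith, by push_cast; linarith⟩]
      ring
  have hfloor : ∀ j : ℤ, 0 ≤ j → j ≤ (k:ℤ) →
      ⌊r₁ + (j:ℝ) * ((mr:ℝ) + d) - t⌋ = ⌊r₁⌋ + j*mr + (if t ≤ a + (j:ℝ)*d - ε then 0 else -1) := by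
    intro j hj0 hjk
    have hj0R : (0:ℝ) ≤ (j:ℝ) := by exact_mod_cast hj0
    have hjkR : (j:ℝ) ≤ (k:ℝ) := by exact_mod_cast hjk
    have hjd0 : 0 ≤ (j:ℝ)*d := mul_nonneg hj0R hd.le
    have hjdk : (j:ℝ)*d ≤ (k:ℝ)*d := mul_le_mul_of_nonneg_right hjkR hd.le
    have heq : r₁ + (j:ℝ) * ((mr:ℝ) + d) - t
        = (a + (j:ℝ)*d - ε - t) + ((⌊r₁⌋ + j*mr : ℤ):ℝ) := by
      push_cast; linear_combination e2
    rw [heq, Int.floor_add_intCast]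
    split_ifs with h
    · rw [show (⌊a + (j:ℝ)*d - ε - t⌋ = 0) from Int.floor_eq_iff.mpr
        ⟨by push_cast; linarith, by push_cast; linarith⟩]
      ring
    · push_neg at h
      rw [show (⌊a + (j:ℝ)*d - ε - t⌋ = -1) from Int.floor_eq_iff.mpr
        ⟨by push_cast; linarith, by push_cast; linarith⟩]
      ring
  -- row characterization
  have hrow : ∀ q n : ℤ, y₁ ≤ q → q ≤ y₂ →
      ((ℓ₁ * ((y₂:ℝ) - (q:ℝ)) + ℓ₂ * ((q:ℝ) - (y₁:ℝ)) ≤ ((n:ℝ) + t) * ((y₂:ℝ) - (y₁:ℝ)) ↔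
        ⌊ℓ₁⌋ + (q - y₁)*mℓ + (if t < a + ((q - y₁ : ℤ):ℝ)*d + ε then 1 else 0) ≤ n) ∧
       (((n:ℝ) + t) * ((y₂:ℝ) - (y₁:ℝ)) ≤ r₁ * ((y₂:ℝ) - (q:ℝ)) + r₂ * ((q:ℝ) - (y₁:ℝ)) ↔
        n ≤ ⌊r₁⌋ + (q - y₁)*mr + (if t ≤ a + ((q - y₁ : ℤ):ℝ)*d - ε then 0 else -1))) := by
    intro q n hq1 hq2
    have hj0 : (0:ℤ) ≤ q - y₁ := by omega
    have hjk : q - y₁ ≤ (k:ℤ) := by omega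
    have hcastq : (q:ℝ) = (y₁:ℝ) + ((q - y₁ : ℤ):ℝ) := by push_cast; ring
    constructor
    · have e : ℓ₁ * ((y₂:ℝ) - (q:ℝ)) + ℓ₂ * ((q:ℝ) - (y₁:ℝ))
          = (k:ℝ) * (ℓ₁ + ((q - y₁ : ℤ):ℝ)*((mℓ:ℝ) + d)) := by
        rw [hcastq]
        linear_combination ℓ₁ * hyR + ((q - y₁ : ℤ):ℝ) * hLdiff
      have e' : ((n:ℝ) + t) * ((y₂:ℝ) - (y₁:ℝ)) = (k:ℝ) * ((n:ℝ) + t) := by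
        rw [hyR]; ring
      rw [e, e', mul_le_mul_iff_right₀ hk0,
        show (ℓ₁ + ((q - y₁ : ℤ):ℝ)*((mℓ:ℝ) + d) ≤ (n:ℝ) + t ↔
          ℓ₁ + ((q - y₁ : ℤ):ℝ)*((mℓ:ℝ) + d) - t ≤ (n:ℝ)) from ⟨fun h => by linarith, fun h => by linarith⟩,
        ← Int.ceil_le, hceil (q - y₁) hj0 hjk]
    · have e : r₁ * ((y₂:ℝ) - (q:ℝ)) + r₂ * ((q:ℝ) - (y₁:ℝ))
          = (k:ℝ) * (r₁ + ((q - y₁ : ℤ):ℝ)*((mr:ℝ) + d)) := by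
        rw [hcastq]
        linear_combination r₁ * hyR + ((q - y₁ : ℤ):ℝ) * hRdiff
      have e' : ((n:ℝ) + t) * ((y₂:ℝ) - (y₁:ℝ)) = (k:ℝ) * ((n:ℝ) + t) := by
        rw [hyR]; ring
      rw [e, e', mul_le_mul_iff_right₀ hk0,
        show ((n:ℝ) + t ≤ r₁ + ((q - y₁ : ℤ):ℝ)*((mr:ℝ) + d) ↔
          (n:ℝ) ≤ r₁ + ((q - y₁ : ℤ):ℝ)*((mr:ℝ) + d) - t) from ⟨fun h => by linarith, fun h => by linarith⟩,
        ← Int.le_floor, hfloor (q - y₁) hj0 hjk]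
  classical
  set F : Finset (ℤ × ℤ) := (Finset.Icc (0:ℤ) (k:ℤ)).biUnion (fun j =>
    (Finset.Icc (⌊ℓ₁⌋ + j*mℓ + (if t < a + (j:ℝ)*d + ε then 1 else 0))
      (⌊r₁⌋ + j*mr + (if t ≤ a + (j:ℝ)*d - ε then 0 else -1))).map
      ⟨fun n => (n, y₁ + j), fun n n' h => (Prod.ext_iff.mp h).1⟩) with hF
  have hseteq : {p : ℤ × ℤ | ((p.1 : ℝ) + t, (p.2 : ℝ)) ∈
      convexHull ℝ {(ℓ₁, (y₁ : ℝ)), (r₁, (y₁ : ℝ)), (ℓ₂, (y₂ : ℝ)), (r₂, (y₂ : ℝ))}} = ↑F := by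
    ext ⟨n, q⟩
    simp only [Set.mem_setOf_eq, hF, Finset.mem_coe, Finset.mem_biUnion, Finset.mem_map,
      Finset.mem_Icc, Function.Embedding.coeFn_mk, Prod.mk.injEq]
    rw [hull_char ℓ₁ r₁ ℓ₂ r₂ (y₁:ℝ) (y₂:ℝ) hl1 hl2 hy12]
    simp only [DFunLike.coe, Prod.mk.injEq]
    constructor
    · rintro ⟨hq1, hq2, hq3, hq4⟩
      have hq1' : y₁ ≤ q := by exact_mod_cast hq1
      have hq2' : q ≤ y₂ := by exact_mod_cast hq2
      obtain ⟨hiff1, hiff2⟩ := hrow q n hq1' hq2'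
      refine ⟨q - y₁, ⟨by omega, by omega⟩, n, ⟨hiff1.mp hq3, hiff2.mp hq4⟩, rfl, by omega⟩
    · rintro ⟨j, ⟨hj1, hj2⟩, m, ⟨hm1, hm2⟩, rfl, rfl⟩
      have hq1' : y₁ ≤ y₁ + j := by omega
      have hq2' : y₁ + j ≤ y₂ := by omega
      obtain ⟨hiff1, hiff2⟩ := hrow (y₁ + j) m hq1' hq2'
      have hjj : y₁ + j - y₁ = j := by ring
      rw [hjj] at hiff1 hiff2
      exact ⟨by exact_mod_cast hq1', by exact_mod_cast hq2', hiff1.mpr hm1, hiff2.mpr hm2⟩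
  have hcount : {p : ℤ × ℤ | ((p.1 : ℝ) + t, (p.2 : ℝ)) ∈
      convexHull ℝ {(ℓ₁, (y₁ : ℝ)), (r₁, (y₁ : ℝ)), (ℓ₂, (y₂ : ℝ)), (r₂, (y₂ : ℝ))}}.ncard
      = F.card := by rw [hseteq, Set.ncard_coe_finset]
  have hdisj : ∀ j1 ∈ Finset.Icc (0:ℤ) (k:ℤ), ∀ j2 ∈ Finset.Icc (0:ℤ) (k:ℤ), j1 ≠ j2 →
      Disjoint ((Finset.Icc (⌊ℓ₁⌋ + j1*mℓ + (if t < a + (j1:ℝ)*d + ε then 1 else 0))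
        (⌊r₁⌋ + j1*mr + (if t ≤ a + (j1:ℝ)*d - ε then 0 else -1))).map
        ⟨fun n => (n, y₁ + j1), fun n n' h => (Prod.ext_iff.mp h).1⟩)
        ((Finset.Icc (⌊ℓ₁⌋ + j2*mℓ + (if t < a + (j2:ℝ)*d + ε then 1 else 0))
        (⌊r₁⌋ + j2*mr + (if t ≤ a + (j2:ℝ)*d - ε then 0 else -1))).map
        ⟨fun n => (n, y₁ + j2), fun n n' h => (Prod.ext_iff.mp h).1⟩) := by
    intro j1 _ j2 _ hne
    simp only [Finset.disjoint_left, Finset.mem_map, Function.Embedding.coeFn_mk,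
      Finset.mem_Icc]
    rintro p ⟨m, _, rfl⟩ ⟨m', _, he⟩
    apply hne
    have := congrArg Prod.snd he
    simp only [DFunLike.coe] at this
    omega
  have hcard : F.card = ∑ j ∈ Finset.Icc (0:ℤ) (k:ℤ),
      ((⌊r₁⌋ + j*mr + (if t ≤ a + (j:ℝ)*d - ε then 0 else -1)) + 1
        - (⌊ℓ₁⌋ + j*mℓ + (if t < a + (j:ℝ)*d + ε then 1 else 0))).toNat := by
    rw [hF, Finset.card_biUnion hdisj]
    refine Finset.sum_congr rfl fun j hj => ?_
    rw [Finset.card_map, Int.card_Icc]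
  have hval : ∀ j ∈ Finset.Icc (0:ℤ) (k:ℤ),
      ((⌊r₁⌋ + j*mr + (if t ≤ a + (j:ℝ)*d - ε then 0 else -1)) + 1
        - (⌊ℓ₁⌋ + j*mℓ + (if t < a + (j:ℝ)*d + ε then 1 else 0)))
      = ((⌊r₁⌋ + j*mr) - (⌊ℓ₁⌋ + j*mℓ))
        - (if |t - (a + (j:ℝ)*d)| < ε then 1 else 0) := by
    intro j hj
    by_cases hb : t ≤ a + (j:ℝ)*d - ε
    · have hc : t < a + (j:ℝ)*d + ε := by linarith
      have habs : ¬ |t - (a + (j:ℝ)*d)| < ε := by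
        rw [abs_lt]; push_neg; intro h'; linarith
      simp only [if_pos hb, if_pos hc, if_neg habs]
      ring
    · push_neg at hb
      by_cases hc : t < a + (j:ℝ)*d + ε
      · have habs : |t - (a + (j:ℝ)*d)| < ε := abs_lt.mpr ⟨by linarith, by linarith⟩
        simp only [if_neg (not_le.mpr hb), if_pos hc, if_pos habs]
        ring
      · push_neg at hc
        have habs : ¬ |t - (a + (j:ℝ)*d)| < ε := by
          rw [abs_lt]; push_neg; intro h'; linarith
        simp only [if_neg (not_le.mpr hb), if_neg (not_lt.mpr hc), if_neg habs]
        ring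
  have hcardZ : (F.card : ℤ) = (∑ j ∈ Finset.Icc (0:ℤ) (k:ℤ), ((⌊r₁⌋ + j*mr) - (⌊ℓ₁⌋ + j*mℓ)))
      - (∑ j ∈ Finset.Icc (0:ℤ) (k:ℤ), (if |t - (a + (j:ℝ)*d)| < ε then (1:ℤ) else 0)) := by
    rw [hcard, Nat.cast_sum, ← Finset.sum_sub_distrib]
    refine Finset.sum_congr rfl fun j hj => ?_
    have hj' := Finset.mem_Icc.mp hj
    have h0 : (0:ℤ) ≤ ((⌊r₁⌋ + j*mr + (if t ≤ a + (j:ℝ)*d - ε then 0 else -1)) + 1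
        - (⌊ℓ₁⌋ + j*mℓ + (if t < a + (j:ℝ)*d + ε then 1 else 0))) := by
      rw [hval j hj]
      have := hW j hj'.1 hj'.2
      split_ifs <;> omega
    rw [Int.toNat_of_nonneg h0, hval j hj]
  rw [hcount]
  by_cases hex : ∃ i ≤ k, |t - (a + i * d)| < ε
  · rw [if_pos hex]
    obtain ⟨i, hik, habs⟩ := hex
    have hsumχ : ∑ j ∈ Finset.Icc (0:ℤ) (k:ℤ),
        (if |t - (a + (j:ℝ)*d)| < ε then (1:ℤ) else 0) = 1 := by
      have hmem : (i:ℤ) ∈ Finset.Icc (0:ℤ) (k:ℤ) :=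
        Finset.mem_Icc.mpr ⟨by positivity, by exact_mod_cast hik⟩
      rw [Finset.sum_eq_single_of_mem (i:ℤ) hmem]
      · have hci : (((i:ℤ)):ℝ) = (i:ℝ) := by push_cast; ring
        rw [hci, if_pos habs]
      · intro j hj hne
        rw [if_neg]
        intro habs'
        rw [abs_lt] at habs habs'
        have hci : (((i:ℤ)):ℝ) = (i:ℝ) := by push_cast; ring
        have hd1 : ((j:ℝ) - (i:ℝ)) * d < d := by nlinarith [habs.1, habs'.2, hεd]
        have hd2 : ((i:ℝ) - (j:ℝ)) * d < d := by nlinarith [habs.2, habs'.1, hεd]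
        have hji1 : (j:ℝ) - (i:ℝ) < 1 := by nlinarith [hd1, hd]
        have hji2 : (i:ℝ) - (j:ℝ) < 1 := by nlinarith [hd2, hd]
        have hji : j = (i:ℤ) := by
          have c1 : ((j - (i:ℤ) : ℤ):ℝ) < 1 := by push_cast; linarith
          have c2 : (((i:ℤ) - j : ℤ):ℝ) < 1 := by push_cast; linarith
          have c1' : (j - (i:ℤ) : ℤ) < 1 := by exact_mod_cast c1
          have c2' : ((i:ℤ) - j : ℤ) < 1 := by exact_mod_cast c2
          omega
        exact hne hji
    have hfinal : (F.card : ℤ)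
        = (((∑ j ∈ Finset.Icc (0:ℤ) (k:ℤ), ((⌊r₁⌋ + j*mr) - (⌊ℓ₁⌋ + j*mℓ))) - 1).toNat : ℤ) + 0 := by
      rw [hcardZ, hsumχ, hM]; ring
    exact_mod_cast hfinal
  · rw [if_neg hex]
    have hsumχ : ∑ j ∈ Finset.Icc (0:ℤ) (k:ℤ),
        (if |t - (a + (j:ℝ)*d)| < ε then (1:ℤ) else 0) = 0 := by
      refine Finset.sum_eq_zero fun j hj => ?_
      have hj' := Finset.mem_Icc.mp hj
      rw [if_neg]
      intro habs
      apply hex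
      refine ⟨j.toNat, by omega, ?_⟩
      have hc : ((j.toNat : ℕ) : ℝ) = (j : ℝ) := by
        exact_mod_cast congrArg (fun z : ℤ => (z : ℝ)) (Int.toNat_of_nonneg hj'.1)
      rw [hc]
      exact habs
    have hfinal : (F.card : ℤ)
        = (((∑ j ∈ Finset.Icc (0:ℤ) (k:ℤ), ((⌊r₁⌋ + j*mr) - (⌊ℓ₁⌋ + j*mℓ))) - 1).toNat : ℤ) + 1 := by
      rw [hcardZ, hsumχ, hM]; ring
    exact_mod_cast hfinal
end

section
/- Let b₁, b₂ be a reduced basis of a lattice in ℝ² (‖b₁‖ ≤ ‖b₂‖, Gram–Schmidt coefficient |μ| ≤ 1/2). Let y ∈ ℝ² satisfy b₁ᵀy = 1 and b₂ᵀy = 0. Then ‖y‖² ≤ (4/3)·(1/‖b₁‖²). -/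
set_option maxHeartbeats 1000000


theorem stmt10 (b₁ b₂ b₂s : EuclideanSpace ℝ (Fin 2)) (μ : ℝ) (hb₁ : b₁ ≠ 0)
    (hle : ‖b₁‖ ≤ ‖b₂‖) (hdecomp : b₂ = b₂s + μ • b₁)
    (horth : (inner ℝ b₂s b₁ : ℝ) = 0) (hμ : |μ| ≤ 1 / 2)
    (y : EuclideanSpace ℝ (Fin 2))
    (hy1 : (inner ℝ b₁ y : ℝ) = 1) (hy2 : (inner ℝ b₂ y : ℝ) = 0) :
    ‖y‖ ^ 2 ≤ (4 / 3) * (1 / ‖b₁‖ ^ 2) := by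
  set A : ℝ := ‖b₁‖ ^ 2 with hA
  set B : ℝ := ‖b₂s‖ ^ 2 with hB
  have hApos : 0 < A := pow_pos (norm_pos_iff.mpr hb₁) 2
  have horth' : (inner ℝ b₁ b₂s : ℝ) = 0 := by rw [real_inner_comm]; exact horth
  have hnb2 : ‖b₂‖ ^ 2 = B + μ ^ 2 * A := by
    rw [hdecomp, norm_add_sq_real, real_inner_smul_right, horth, norm_smul, mul_pow]
    simp [hA, hB, sq_abs]
  have hμ2 : μ ^ 2 ≤ 1 / 4 := by
    have := sq_abs μ
    nlinarith [abs_nonneg μ]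
  have hBge : 3 / 4 * A ≤ B := by
    have h : A ≤ B + μ ^ 2 * A := by
      have := pow_le_pow_left₀ (norm_nonneg b₁) hle 2
      nlinarith
    nlinarith
  have hBpos : 0 < B := by nlinarith
  have hb₂s : b₂s ≠ 0 := by
    intro h
    rw [h, norm_zero] at hB
    simp at hB
    nlinarith
  have hy2' : (inner ℝ b₂s y : ℝ) = -μ := by
    have h : (inner ℝ b₂ y : ℝ) = inner ℝ b₂s y + μ * inner ℝ b₁ y := by
      rw [hdecomp, inner_add_left, real_inner_smul_left]
    rw [hy2, hy1] at h; linarith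
  set v : EuclideanSpace ℝ (Fin 2) :=
    y - (1 / A) • b₁ + (μ / B) • b₂s with hv
  have hself1 : (inner ℝ b₁ b₁ : ℝ) = A := real_inner_self_eq_norm_sq b₁
  have hself2 : (inner ℝ b₂s b₂s : ℝ) = B := real_inner_self_eq_norm_sq b₂s
  have hiv1 : (inner ℝ b₁ v : ℝ) = 0 := by
    rw [hv, inner_add_right, inner_sub_right, real_inner_smul_right,
      real_inner_smul_right, hself1, horth', hy1]
    field_simp
    ring
  have hiv2 : (inner ℝ b₂s v : ℝ) = 0 := by
    rw [hv, inner_add_right, inner_sub_right, real_inner_smul_right,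
      real_inner_smul_right, hself2, horth, hy2']
    field_simp
    ring
  -- linear independence of b₁, b₂s
  have hli : LinearIndependent ℝ ![b₁, b₂s] := by
    rw [LinearIndependent.pair_iff]
    intro s t hst
    have h1 : (inner ℝ b₁ (s • b₁ + t • b₂s) : ℝ) = 0 := by rw [hst, inner_zero_right]
    have h2 : (inner ℝ b₂s (s • b₁ + t • b₂s) : ℝ) = 0 := by rw [hst, inner_zero_right]
    rw [inner_add_right, real_inner_smul_right, real_inner_smul_right, hself1, horth'] at h1
    rw [inner_add_right, real_inner_smul_right, real_inner_smul_right, hself2, horth] at h2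
    constructor
    · have : s * A = 0 := by linarith
      exact by nlinarith
    · have : t * B = 0 := by linarith
      exact by nlinarith
  have hspan : Submodule.span ℝ {b₁, b₂s} = ⊤ := by
    apply Submodule.eq_top_of_finrank_eq
    have h1 : ({b₁, b₂s} : Set (EuclideanSpace ℝ (Fin 2))) = Set.range ![b₁, b₂s] := by
      simp [Matrix.range_cons, Matrix.range_empty, Set.insert_comm]
      exact Set.pair_comm b₁ b₂s
    rw [h1, finrank_span_eq_card hli]
    simp [finrank_euclideanSpace]
  have hvz : v = 0 := by
    have key : ∀ w : EuclideanSpace ℝ (Fin 2), (inner ℝ b₁ w : ℝ) = 0 →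
        (inner ℝ b₂s w : ℝ) = 0 → w = 0 := by
      intro w h1 h2
      have hmem : w ∈ Submodule.span ℝ ({b₁, b₂s} : Set (EuclideanSpace ℝ (Fin 2))) := by
        rw [hspan]; trivial
      have hww : (inner ℝ w w : ℝ) = 0 := by
        have : ∀ x ∈ Submodule.span ℝ ({b₁, b₂s} : Set (EuclideanSpace ℝ (Fin 2))),
            (inner ℝ x w : ℝ) = 0 := by
          intro x hx
          induction hx using Submodule.span_induction with
          | mem x hx =>
            rcases hx with h | h
            · subst h; exact h1
            · simp at h; subst h; exact h2
          | zero => exact inner_zero_left w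
          | add x z hx hz ihx ihz => rw [inner_add_left, ihx, ihz]; ring
          | smul c x hx ih => rw [real_inner_smul_left, ih]; ring
        exact this w hmem
      exact inner_self_eq_zero.mp hww
    exact key v hiv1 hiv2
  have hyeq : y = (1 / A) • b₁ - (μ / B) • b₂s := by
    have := hvz
    rw [hv] at this
    rw [← sub_eq_zero, ← this]
    abel
  have hny : ‖y‖ ^ 2 = 1 / A + μ ^ 2 / B := by
    rw [hyeq, norm_sub_sq_real, real_inner_smul_left, real_inner_smul_right, horth',
      norm_smul, norm_smul, mul_pow, mul_pow]
    simp [hA, hB, sq_abs]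
    field_simp
    ring
    rw [sq_abs]
  rw [hny]
  have h1 : μ ^ 2 / B ≤ 1 / (3 * A) := by
    rw [div_le_div_iff₀ hBpos (by positivity)]
    nlinarith
  have h2 : (1:ℝ)/A + 1/(3*A) = 4/3 * (1/A) := by field_simp; ring
  linarith
end

section
/- Let b₁, b₂ be a reduced basis of the dual lattice Λ* of a two-dimensional lattice Λ ⊂ ℝ² (‖b₁‖ ≤ ‖b₂‖ and Gram–Schmidt coefficient |μ| ≤ 1/2), and let P = {x ∈ ℝ² : 0 ≤ b₁ᵀx < 1 and 0 ≤ b₂ᵀx < 1} be the associated fundamental parallelepiped of Λ. Then the diameter of P is at most 2.4/‖b₁‖. -/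
theorem stmt11 (b₁ b₂ b₂s : EuclideanSpace ℝ (Fin 2)) (μ : ℝ)
    (hind : LinearIndependent ℝ ![b₁, b₂])
    (hle : ‖b₁‖ ≤ ‖b₂‖) (hdecomp : b₂ = b₂s + μ • b₁)
    (horth : (inner ℝ b₂s b₁ : ℝ) = 0) (hμ : |μ| ≤ 1 / 2) :
    Metric.diam {x : EuclideanSpace ℝ (Fin 2) |
        0 ≤ (inner ℝ b₁ x : ℝ) ∧ (inner ℝ b₁ x : ℝ) < 1 ∧
        0 ≤ (inner ℝ b₂ x : ℝ) ∧ (inner ℝ b₂ x : ℝ) < 1}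
      ≤ 2.4 / ‖b₁‖ := by
  have hb1 : b₁ ≠ 0 := by
    have := hind.ne_zero 0; simpa using this
  have hb1n : (0:ℝ) < ‖b₁‖ := norm_pos_iff.mpr hb1
  have hsq : ‖b₂‖^2 = ‖b₂s‖^2 + μ^2 * ‖b₁‖^2 := by
    have h := norm_add_sq_real b₂s (μ • b₁)
    rw [real_inner_smul_right, horth, norm_smul] at h
    rw [hdecomp, h]
    simp [mul_pow, sq_abs]
  have hμ2 : μ^2 ≤ 1/4 := by nlinarith [sq_abs μ, abs_nonneg μ]
  have hb2s_sq : 3/4 * ‖b₁‖^2 ≤ ‖b₂s‖^2 := by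
    nlinarith [norm_nonneg b₂, norm_nonneg b₁]
  have hb2sn : (0:ℝ) < ‖b₂s‖ := by
    nlinarith [norm_nonneg b₂s]
  have hspan : Submodule.span ℝ ({b₁, b₂s} : Set (EuclideanSpace ℝ (Fin 2))) = ⊤ := by
    have h1 : Submodule.span ℝ (Set.range ![b₁, b₂]) = ⊤ := by
      apply Submodule.eq_top_of_finrank_eq
      rw [finrank_span_eq_card hind]
      simp [finrank_euclideanSpace_fin]
    have h2 : (Set.range ![b₁, b₂]) ⊆ (Submodule.span ℝ ({b₁, b₂s} : Set (EuclideanSpace ℝ (Fin 2))) : Set _) := by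
      intro v hv
      rcases hv with ⟨i, rfl⟩
      fin_cases i
      · exact Submodule.subset_span (by simp)
      · show b₂ ∈ _
        rw [hdecomp]
        exact Submodule.add_mem _ (Submodule.subset_span (by simp))
          (Submodule.smul_mem _ _ (Submodule.subset_span (by simp)))
    have := Submodule.span_le.mpr h2
    rw [h1] at this
    exact top_le_iff.mp this
  apply Metric.diam_le_of_forall_dist_le (by positivity)
  rintro x ⟨h1x, h2x, h3x, h4x⟩ y ⟨h1y, h2y, h3y, h4y⟩
  set d := x - y with hd
  clear_value d
  have hdmem : d ∈ Submodule.span ℝ ({b₁, b₂s} : Set (EuclideanSpace ℝ (Fin 2))) := by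
    rw [hspan]; trivial
  rw [Submodule.mem_span_pair] at hdmem
  obtain ⟨a, b, hab⟩ := hdmem
  have h0 : (inner ℝ b₁ b₂s : ℝ) = 0 := by rw [real_inner_comm]; exact horth
  have hi1 : (inner ℝ b₁ d : ℝ) = a * ‖b₁‖^2 := by
    rw [← hab, inner_add_right, real_inner_smul_right, real_inner_smul_right,
      real_inner_self_eq_norm_sq, h0]
    ring
  have hi2 : (inner ℝ b₂s d : ℝ) = b * ‖b₂s‖^2 := by
    rw [← hab, inner_add_right, real_inner_smul_right, real_inner_smul_right,
      real_inner_self_eq_norm_sq, horth]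
    ring
  have hnd : ‖d‖^2 = a^2 * ‖b₁‖^2 + b^2 * ‖b₂s‖^2 := by
    have h : ‖d‖^2 = (inner ℝ d d : ℝ) := (real_inner_self_eq_norm_sq d).symm
    rw [h]
    nth_rewrite 1 [← hab]
    rw [inner_add_left, real_inner_smul_left, real_inner_smul_left, hi1, hi2]
    ring
  have hb1d : |(inner ℝ b₁ d : ℝ)| ≤ 1 := by
    have h : (inner ℝ b₁ d : ℝ) = (inner ℝ b₁ x : ℝ) - (inner ℝ b₁ y : ℝ) := by
      rw [hd, inner_sub_right]
    rw [h, abs_le]; constructor <;> linarith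
  have hb2d : |(inner ℝ b₂ d : ℝ)| ≤ 1 := by
    have h : (inner ℝ b₂ d : ℝ) = (inner ℝ b₂ x : ℝ) - (inner ℝ b₂ y : ℝ) := by
      rw [hd, inner_sub_right]
    rw [h, abs_le]; constructor <;> linarith
  have hb2sd : |(inner ℝ b₂s d : ℝ)| ≤ 3/2 := by
    have he : (inner ℝ b₂s d : ℝ) = (inner ℝ b₂ d : ℝ) - μ * (inner ℝ b₁ d : ℝ) := by
      rw [hdecomp, inner_add_left, real_inner_smul_left]; ring
    have htri : |(inner ℝ b₂ d : ℝ) - μ * (inner ℝ b₁ d : ℝ)|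
        ≤ |(inner ℝ b₂ d : ℝ)| + |μ * (inner ℝ b₁ d : ℝ)| := abs_sub _ _
    have hm : |μ * (inner ℝ b₁ d : ℝ)| ≤ 1/2 := by
      rw [abs_mul]
      have := mul_le_mul hμ hb1d (abs_nonneg _) (by norm_num : (0:ℝ) ≤ 1/2)
      linarith
    rw [he]; linarith
  have ha2 : a^2 * ‖b₁‖^2 ≤ 1 / ‖b₁‖^2 := by
    have h2 : ((inner ℝ b₁ d : ℝ))^2 ≤ 1 := by
      have := pow_le_pow_left₀ (abs_nonneg ((inner ℝ b₁ d : ℝ))) hb1d 2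
      rw [sq_abs] at this
      simpa using this
    rw [hi1] at h2
    rw [le_div_iff₀ (by positivity : (0:ℝ) < ‖b₁‖^2)]
    have hr : (a * ‖b₁‖^2)^2 = a^2 * ‖b₁‖^2 * ‖b₁‖^2 := by ring
    linarith
  have hb2 : b^2 * ‖b₂s‖^2 ≤ 3 / ‖b₁‖^2 := by
    have h2 : ((inner ℝ b₂s d : ℝ))^2 ≤ 9/4 := by
      have := pow_le_pow_left₀ (abs_nonneg ((inner ℝ b₂s d : ℝ))) hb2sd 2
      rw [sq_abs] at this
      calc ((inner ℝ b₂s d : ℝ))^2 ≤ (3/2)^2 := this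
        _ = 9/4 := by norm_num
    rw [hi2] at h2
    have hb2s2 : (0:ℝ) < ‖b₂s‖^2 := by positivity
    have hstep : b^2 * ‖b₂s‖^2 ≤ 9/4 / ‖b₂s‖^2 := by
      rw [le_div_iff₀ hb2s2]
      have hr : (b * ‖b₂s‖^2)^2 = b^2 * ‖b₂s‖^2 * ‖b₂s‖^2 := by ring
      linarith
    have hstep2 : (9:ℝ)/4 / ‖b₂s‖^2 ≤ 3 / ‖b₁‖^2 := by
      rw [div_le_div_iff₀ hb2s2 (by positivity)]
      linarith
    exact hstep.trans hstep2
  have hfinal : ‖d‖^2 ≤ 4 / ‖b₁‖^2 := by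
    rw [hnd]
    have h : (1:ℝ) / ‖b₁‖^2 + 3 / ‖b₁‖^2 = 4 / ‖b₁‖^2 := by ring
    linarith
  have hdist : dist x y = ‖d‖ := by rw [hd, dist_eq_norm]
  rw [hdist]
  have h24 : (2:ℝ) / ‖b₁‖ ≤ 2.4 / ‖b₁‖ := by
    gcongr <;> norm_num
  refine le_trans ?_ h24
  have hd0 : (0:ℝ) ≤ ‖d‖ := norm_nonneg d
  have h2pos : (0:ℝ) < 2 / ‖b₁‖ := by positivity
  have hsq4 : ((2:ℝ) / ‖b₁‖)^2 = 4 / ‖b₁‖^2 := by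
    rw [div_pow]; norm_num
  have h : ‖d‖^2 ≤ (2/‖b₁‖)^2 := by rw [hsq4]; exact hfinal
  exact (pow_le_pow_iff_left₀ hd0 h2pos.le (by norm_num)).mp h
end
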